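/- Under the hypotheses above, with the circuit graph (V, E) connected: the linear functionals q ↦ Q_J for J ∈ Γ_C span a space of dimension exactly |Γ_C| − 1; i.e., any |Γ_C| − 1 of them are linearly independent and the only linear relation is Σ_J Q_J = 0. -/

import Mathlib

/-- The incidence matrix of a finite directed graph. -/
def inc {Eg Vt : Type*} [DecidableEq Vt] (hd tl : Eg → Vt) : Matrix Eg Vt ℝ :=
  Matrix.of fun e v => if v = hd e then 1 else if v = tl e then -1 else 0

/-- Undirected adjacency through the edges in `S`. -/
def Adj {Eg Vt : Type*} (hd tl : Eg → Vt) (S : Set Eg) (u w : Vt) : Prop :=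
  ∃ e ∈ S, (tl e = u ∧ hd e = w) ∨ (hd e = u ∧ tl e = w)

lemma sum_mul_inc {Eg Vt : Type*} [Fintype Vt] [DecidableEq Vt]
    (hd tl : Eg → Vt) (hne : ∀ e, hd e ≠ tl e) (g : Vt → ℝ) (e : Eg) :
    ∑ v, g v * inc hd tl e v = g (hd e) - g (tl e) := by
  have h : ∀ v, g v * inc hd tl e v
      = (if v = hd e then g v else 0) + (if v = tl e then -g v else 0) := by
    intro v
    simp only [inc, Matrix.of_apply]
    rcases eq_or_ne v (hd e) with h1 | h1
    · subst h1; simp [hne e]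
    · rcases eq_or_ne v (tl e) with h2 | h2
      · subst h2; simp [h1]
      · simp [h1, h2]
  simp_rw [h, Finset.sum_add_distrib, Finset.sum_ite_eq' Finset.univ (hd e) g,
    Finset.sum_ite_eq' Finset.univ (tl e) (fun v => -g v), Finset.mem_univ, if_pos]
  ring

lemma stmt14_aux {Eg Vt : Type*} [Fintype Eg] [Fintype Vt] [DecidableEq Vt]
    (hd tl : Eg → Vt) (hne : ∀ e, hd e ≠ tl e) (C : Set Eg) [DecidablePred (· ∈ C)]
    (s : Setoid Vt) [Fintype (Quotient s)] [DecidableEq (Quotient s)]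
    (hCedge : ∀ e ∉ C, Quotient.mk s (hd e) = Quotient.mk s (tl e))
    (hconn : ∀ u w : Vt, Relation.ReflTransGen (Adj hd tl Set.univ) u w) :
    Module.finrank ℝ
        (Submodule.span ℝ
          (Set.range fun J : Quotient s =>
            fun e : {e // e ∈ C} =>
              ∑ v ∈ Finset.univ.filter (fun v : Vt => Quotient.mk s v = J),
                inc hd tl e.1 v)) =
      Nat.card (Quotient s) - 1 := by
  set f : Quotient s → ({e // e ∈ C} → ℝ) := fun J => fun e : {e // e ∈ C} =>
    ∑ v ∈ Finset.univ.filter (fun v : Vt => Quotient.mk s v = J), inc hd tl e.1 v with hf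
  set T := Fintype.linearCombination ℝ f with hT
  have hTapp : ∀ (c : Quotient s → ℝ) (e : {e // e ∈ C}),
      T c e = c (Quotient.mk s (hd e.1)) - c (Quotient.mk s (tl e.1)) := by
    intro c e
    have h1 : T c e = ∑ J : Quotient s, c J • f J e := by
      rw [hT, Fintype.linearCombination_apply]; simp
    rw [h1]
    have h2 : ∑ J : Quotient s, c J • f J e
        = ∑ J : Quotient s, ∑ v ∈ Finset.univ.filter (fun v : Vt => Quotient.mk s v = J),
            c (Quotient.mk s v) * inc hd tl e.1 v := by
      refine Finset.sum_congr rfl fun J _ => ?_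
      rw [hf, smul_eq_mul, Finset.mul_sum]
      refine Finset.sum_congr rfl fun v hv => ?_
      rw [(Finset.mem_filter.mp hv).2]
    rw [h2, Finset.sum_fiberwise (Finset.univ : Finset Vt)
      (fun v : Vt => Quotient.mk s v)
      (fun v : Vt => c (Quotient.mk s v) * inc hd tl e.1 v),
      sum_mul_inc hd tl hne]
  have hrange : LinearMap.range T = Submodule.span ℝ (Set.range f) :=
    Fintype.range_linearCombination ℝ f
  have hker_mem : ∀ c : Quotient s → ℝ, c ∈ LinearMap.ker T ↔
      ∀ u w : Vt, c (Quotient.mk s u) = c (Quotient.mk s w) := by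
    intro c
    constructor
    · intro hc u w
      have hedge : ∀ a b : Vt, Adj hd tl Set.univ a b
          → c (Quotient.mk s a) = c (Quotient.mk s b) := by
        intro a b ⟨e, _, hab⟩
        have key : c (Quotient.mk s (hd e)) = c (Quotient.mk s (tl e)) := by
          by_cases he : e ∈ C
          · have h3 := congrFun (LinearMap.mem_ker.mp hc) ⟨e, he⟩
            rw [hTapp] at h3
            simp only [Pi.zero_apply] at h3
            linarith
          · rw [hCedge e he]
        rcases hab with ⟨ha, hb⟩ | ⟨ha, hb⟩
        · rw [← ha, ← hb]; exact key.symm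
        · rw [← ha, ← hb]; exact key
      have h4 := hconn u w
      induction h4 with
      | refl => rfl
      | tail _ hab ih => exact ih.trans (hedge _ _ hab)
    · intro hc
      apply LinearMap.mem_ker.mpr
      funext e
      rw [hTapp, hc (hd e.1) (tl e.1)]
      simp
  rcases isEmpty_or_nonempty (Quotient s) with hQe | hQn
  · have h1 : Set.range f = ∅ := Set.range_eq_empty f
    have h2 : Nat.card (Quotient s) = 0 := Nat.card_of_isEmpty
    rw [h1, h2, Submodule.span_empty]
    simp
  · have hVt : Nonempty Vt := by
      obtain ⟨J⟩ := hQn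
      obtain ⟨v, _⟩ := Quotient.exists_rep J
      exact ⟨v⟩
    obtain ⟨v₀⟩ := hVt
    have hker : LinearMap.ker T = Submodule.span ℝ {(fun _ => 1 : Quotient s → ℝ)} := by
      apply le_antisymm
      · intro c hc
        have hcc := (hker_mem c).mp hc
        have h5 : c = c (Quotient.mk s v₀) • (fun _ => 1 : Quotient s → ℝ) := by
          funext J
          obtain ⟨v, hv⟩ := Quotient.exists_rep J
          rw [← hv]
          simp [hcc v v₀]
        rw [h5]
        exact Submodule.smul_mem _ _ (Submodule.mem_span_singleton_self _)
      · rw [Submodule.span_le, Set.singleton_subset_iff]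
        exact (hker_mem _).mpr fun u w => rfl
    have hone : (fun _ => 1 : Quotient s → ℝ) ≠ 0 := by
      intro h
      have h6 := congrFun h (Quotient.mk s v₀)
      norm_num at h6
    have hkrank : Module.finrank ℝ (LinearMap.ker T) = 1 := by
      rw [hker]
      exact finrank_span_singleton hone
    have hrn := LinearMap.finrank_range_add_finrank_ker T
    rw [hkrank, Module.finrank_fintype_fun_eq_card] at hrn
    rw [← hrange, Nat.card_eq_fintype_card]
    omega

/-- In a connected circuit `(V, E)` with capacitive edges `C` and inductive edges `Cᶜ`, the
island-charge functionals `Q_J : q ↦ ∑_{v ∈ J} ∑_{e ∈ C} q_e Ω_{ev}` (one for each connected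
component `J` of the inductive subgraph, represented here as vectors on `C`) span a space of
dimension exactly `|Γ_C| - 1`, the unique relation being `∑_J Q_J = 0`. -/
theorem stmt14 {Eg Vt : Type*} [Fintype Eg] [Fintype Vt] [DecidableEq Vt]
    (hd tl : Eg → Vt) (hne : ∀ e, hd e ≠ tl e) (C : Set Eg) [DecidablePred (· ∈ C)]
    [Fintype (Quotient (Relation.EqvGen.setoid (Adj hd tl Cᶜ)))]
    [DecidableEq (Quotient (Relation.EqvGen.setoid (Adj hd tl Cᶜ)))]
    (hconn : ∀ u w : Vt, Relation.ReflTransGen (Adj hd tl Set.univ) u w) :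
    Module.finrank ℝ
        (Submodule.span ℝ
          (Set.range fun J : Quotient (Relation.EqvGen.setoid (Adj hd tl Cᶜ)) =>
            fun e : {e // e ∈ C} =>
              ∑ v ∈ Finset.univ.filter
                  (fun v : Vt =>
                    Quotient.mk (Relation.EqvGen.setoid (Adj hd tl Cᶜ)) v = J),
                inc hd tl e.1 v)) =
      Nat.card (Quotient (Relation.EqvGen.setoid (Adj hd tl Cᶜ))) - 1 := by
  exact stmt14_aux hd tl hne C (Relation.EqvGen.setoid (Adj hd tl Cᶜ))
    (fun e he => Quotient.sound (Relation.EqvGen.rel _ _ ⟨e, he, Or.inr ⟨rfl, rfl⟩⟩))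
    hconn
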